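/- Let n ≥ 1, let E := (Fin n → ℝ) × (Fin n → ℝ) with the standard primitive λ, and fix a basepoint x ∈ E. Then the restriction of the Ismagilov–Losik–Michor cocycle to the integer translation lattice is not a coboundary: there is no function b : (Fin n → ℤ) × (Fin n → ℤ) → ℝ such that for all integer vectors v, w one has 𝔊_{x,λ}(τ_{v̄}, τ_{w̄}) = b v + b w − b (v + w), where v̄ ∈ E denotes the real vector obtained from v by coercion. (This is the case M = ℝ^{2n}, Γ = ℤ^{2n} of the theorem that the Ismagilov–Losik–Michor class pulled back to the deck group of a symplectically aspherical manifold — here the torus — is nonzero.) -/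
import Mathlib


open MeasureTheory intervalIntegral

noncomputable section

/-- The standard symplectic form `ω₀` on `(Fin n → ℝ) × (Fin n → ℝ)`. -/
def omega0 {n : ℕ} (z w : (Fin n → ℝ) × (Fin n → ℝ)) : ℝ :=
  ∑ i, (z.1 i * w.2 i - z.2 i * w.1 i)

/-- The standard primitive `λ(p,q)(u,v) = (1/2)·∑ i, (p i * v i − q i * u i)` of the
standard symplectic form, so that `dλ = ω₀`. -/
def stdPrimitive (n : ℕ) (z : (Fin n → ℝ) × (Fin n → ℝ)) :
    ((Fin n → ℝ) × (Fin n → ℝ)) →L[ℝ] ℝ :=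
  LinearMap.toContinuousLinearMap
    { toFun := fun w => (1 / 2) * ∑ i, (z.1 i * w.2 i - z.2 i * w.1 i)
      map_add' := by
        intro a b
        simp only [Prod.fst_add, Prod.snd_add, Pi.add_apply]
        rw [← mul_add, ← Finset.sum_add_distrib]
        congr 1
        apply Finset.sum_congr rfl
        intro i _
        ring
      map_smul' := by
        intro r a
        simp only [Prod.smul_fst, Prod.smul_snd, Pi.smul_apply, smul_eq_mul,
          RingHom.id_apply]
        rw [Finset.mul_sum, Finset.mul_sum, Finset.mul_sum]
        apply Finset.sum_congr rfl
        intro i _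
        ring }

/-- The pullback `g^*λ` of a one-form `λ` by a differentiable map `g`. -/
def oneFormPullback {n : ℕ}
    (g : (Fin n → ℝ) × (Fin n → ℝ) → (Fin n → ℝ) × (Fin n → ℝ))
    (lam : (Fin n → ℝ) × (Fin n → ℝ) → (((Fin n → ℝ) × (Fin n → ℝ)) →L[ℝ] ℝ)) :
    (Fin n → ℝ) × (Fin n → ℝ) → (((Fin n → ℝ) × (Fin n → ℝ)) →L[ℝ] ℝ) :=
  fun y => (lam (g y)).comp (fderiv ℝ g y)

/-- A one-form is closed if its derivative is symmetric. -/
def IsClosedOneForm {n : ℕ}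
    (ω : (Fin n → ℝ) × (Fin n → ℝ) → (((Fin n → ℝ) × (Fin n → ℝ)) →L[ℝ] ℝ)) : Prop :=
  ∀ y u v : (Fin n → ℝ) × (Fin n → ℝ), ((fderiv ℝ ω y) u) v = ((fderiv ℝ ω y) v) u

/-- The Ismagilov–Losik–Michor two-cocycle `𝔊_{x,λ}(g,h)`: the line integral of
`g^*λ − λ` along the straight segment from `x` to `h x`. -/
def ILM {n : ℕ} (x : (Fin n → ℝ) × (Fin n → ℝ))
    (lam : (Fin n → ℝ) × (Fin n → ℝ) → (((Fin n → ℝ) × (Fin n → ℝ)) →L[ℝ] ℝ))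
    (g h : (Fin n → ℝ) × (Fin n → ℝ) → (Fin n → ℝ) × (Fin n → ℝ)) : ℝ :=
  ∫ t in (0:ℝ)..1,
    (oneFormPullback g lam (x + t • (h x - x)) - lam (x + t • (h x - x))) (h x - x)


/-- The coercion of an integer lattice vector to `(Fin n → ℝ) × (Fin n → ℝ)`. -/
def latticeCast {n : ℕ} (v : (Fin n → ℤ) × (Fin n → ℤ)) : (Fin n → ℝ) × (Fin n → ℝ) :=
  (fun i => (v.1 i : ℝ), fun i => (v.2 i : ℝ))

lemma stdPrimitive_apply {n : ℕ} (z w : (Fin n → ℝ) × (Fin n → ℝ)) :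
    stdPrimitive n z w = (1 / 2) * ∑ i, (z.1 i * w.2 i - z.2 i * w.1 i) := rfl

lemma ILM_translation {n : ℕ} (x : (Fin n → ℝ) × (Fin n → ℝ))
    (a c : (Fin n → ℝ) × (Fin n → ℝ)) :
    ILM x (stdPrimitive n) (fun z => z + a) (fun z => z + c)
      = stdPrimitive n a c := by
  have hfd : ∀ y : (Fin n → ℝ) × (Fin n → ℝ),
      fderiv ℝ (fun z : (Fin n → ℝ) × (Fin n → ℝ) => z + a) y
        = ContinuousLinearMap.id ℝ _ := by
    intro y
    rw [fderiv_add_const, fderiv_id']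
  have hint : ∀ t : ℝ,
      (oneFormPullback (fun z => z + a) (stdPrimitive n) (x + t • (x + c - x))
          - stdPrimitive n (x + t • (x + c - x))) (x + c - x)
        = stdPrimitive n a c := by
    intro t
    simp only [oneFormPullback, hfd, ContinuousLinearMap.sub_apply,
      ContinuousLinearMap.comp_apply, ContinuousLinearMap.id_apply]
    have hc : x + c - x = c := by abel
    rw [hc]
    simp only [stdPrimitive_apply, Prod.fst_add, Prod.snd_add, Pi.add_apply]
    rw [← mul_sub, ← Finset.sum_sub_distrib]
    congr 1
    apply Finset.sum_congr rfl
    intro i _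
    ring
  unfold ILM
  rw [intervalIntegral.integral_congr (fun t _ => hint t)]
  simp

/-- For `n ≥ 1`, the restriction of the Ismagilov–Losik–Michor cocycle to the integer
translation lattice `ℤ^{2n} ⊂ ℝ^{2n}` is not a coboundary.  This is the case
`M = ℝ^{2n}`, `Γ = ℤ^{2n}` of the theorem that the Ismagilov–Losik–Michor class pulled
back to the deck group of a symplectically aspherical manifold (here the torus) is
nonzero. -/
theorem ILM_not_coboundary_on_lattice {n : ℕ} (hn : 1 ≤ n)
    (x : (Fin n → ℝ) × (Fin n → ℝ)) :
    ¬ ∃ b : (Fin n → ℤ) × (Fin n → ℤ) → ℝ,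
        ∀ v w : (Fin n → ℤ) × (Fin n → ℤ),
          ILM x (stdPrimitive n) (fun z => z + latticeCast v) (fun z => z + latticeCast w)
            = b v + b w - b (v + w) := by
  rintro ⟨b, hb⟩
  set v : (Fin n → ℤ) × (Fin n → ℤ) := ((fun _ => 1), 0) with hv
  set w : (Fin n → ℤ) × (Fin n → ℤ) := (0, (fun _ => 1)) with hw
  have h1 := hb v w
  have h2 := hb w v
  rw [ILM_translation] at h1 h2
  have hvw : v + w = w + v := add_comm v w
  have hsym : stdPrimitive n (latticeCast v) (latticeCast w)
      = stdPrimitive n (latticeCast w) (latticeCast v) := by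
    rw [h1, h2, hvw]; ring
  have hval : stdPrimitive n (latticeCast v) (latticeCast w) = n / 2 := by
    simp [stdPrimitive_apply, latticeCast, hv, hw, Finset.sum_const]
    ring
  have hval' : stdPrimitive n (latticeCast w) (latticeCast v) = -(n / 2) := by
    simp [stdPrimitive_apply, latticeCast, hv, hw, Finset.sum_const]
    ring
  rw [hval, hval'] at hsym
  have : (n : ℝ) ≠ 0 := Nat.cast_ne_zero.mpr (by omega)
  field_simp at hsym
  exact this (by linarith)

end
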